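/- Let C be a perfect t-deletion binary code of length n with t < n. For any positive integers a and b with a ≤ b ≤ n − t, dS^t(⋃_{a ≤ r ≤ b+2t} C_r) ⊇ ⋃_{a ≤ r ≤ b} (𝔹^{n−t})_r. In particular, Σ_{a ≤ r ≤ b+2t} #dS^t(C_r) ≥ 2·Σ_{a ≤ p ≤ b} C(n−t−1, p−1). -/

import Mathlib

open Filter Finset

/-- The number of runs of a binary sequence (maximal blocks of equal consecutive symbols). -/
def runsCount (x : List Bool) : ℕ := (x.destutter (· ≠ ·)).length

/-- The deletion sphere `dS^t(x)`: all sequences obtained from `x` by deleting `t` symbols,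
i.e. the sublists of `x` of length `x.length - t`. -/
def delSphere (t : ℕ) (x : List Bool) : Set (List Bool) :=
  {y | y.Sublist x ∧ y.length = x.length - t}

/-- `dS^t(X)` for a set `X` of sequences. -/
def delSphereSet (t : ℕ) (X : Set (List Bool)) : Set (List Bool) :=
  ⋃ x ∈ X, delSphere t x

/-- A `t`-deletion code of length `n`: a set of binary sequences of length `n`
with pairwise disjoint deletion spheres. -/
def IsDeletionCode (t n : ℕ) (C : Set (List Bool)) : Prop :=
  (∀ c ∈ C, c.length = n) ∧
  ∀ c ∈ C, ∀ d ∈ C, c ≠ d → delSphere t c ∩ delSphere t d = ∅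

/-- A perfect `t`-deletion code of length `n`: the deletion spheres of codewords
cover all of `𝔹^{n-t}`. -/
def IsPerfectDeletionCode (t n : ℕ) (C : Set (List Bool)) : Prop :=
  IsDeletionCode t n C ∧ delSphereSet t C = {y : List Bool | y.length = n - t}

/-- `M^t(n)`: the maximum cardinality of a `t`-deletion code of length `n`. -/
noncomputable def maxDelCodeSize (t n : ℕ) : ℕ :=
  sSup {m : ℕ | ∃ C : Set (List Bool), IsDeletionCode t n C ∧ C.ncard = m}

lemma runsCount_nil : runsCount ([] : List Bool) = 0 := rfl

lemma runsCount_cons_cons (a b : Bool) (l : List Bool) :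
    runsCount (a :: b :: l) = runsCount (b :: l) + (if a = b then 0 else 1) := by
  unfold runsCount
  by_cases h : a = b
  · subst h
    rw [List.destutter_cons_cons]
    simp [List.destutter_cons']
  · rw [List.destutter_cons_cons]
    simp [h, List.destutter_cons']

lemma runsCount_pos (a : Bool) (l : List Bool) : 0 < runsCount (a :: l) := by
  induction l generalizing a with
  | nil => simp [runsCount]
  | cons b l ih => rw [runsCount_cons_cons]; exact Nat.lt_of_lt_of_le (ih b) (Nat.le_add_right _ _)

lemma runsCount_le_length (l : List Bool) : runsCount l ≤ l.length :=
  (List.destutter_sublist _ l).length_le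

lemma runsCount_le_cons (a : Bool) (l : List Bool) : runsCount l ≤ runsCount (a :: l) := by
  cases l with
  | nil => exact Nat.zero_le _
  | cons b l => rw [runsCount_cons_cons]; exact Nat.le_add_right _ _

lemma runsCount_cons_le (a : Bool) (l : List Bool) : runsCount (a :: l) ≤ runsCount l + 1 := by
  cases l with
  | nil => simp [runsCount]
  | cons b l =>
    rw [runsCount_cons_cons]
    split <;> omega

lemma runsCount_mono_aux : ∀ (k : ℕ) (x y : List Bool), x.length ≤ k → y.Sublist x →
    runsCount y ≤ runsCount x ∧
    (∀ a z, y = a :: z → x.head? ≠ some a → runsCount y < runsCount x) := by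
  intro k
  induction k with
  | zero =>
    intro x y hx hs
    have hx0 : x = [] := List.length_eq_zero_iff.mp (Nat.le_zero.mp hx)
    subst hx0
    have hy0 : y = [] := List.sublist_nil.mp hs
    subst hy0
    exact ⟨le_refl _, by intro a z h; simp at h⟩
  | succ k ih =>
    intro x y hx hs
    cases hs with
    | slnil => exact ⟨le_refl _, by intro a z h; simp at h⟩
    | @cons _ l b h =>
      have hl : l.length ≤ k := by simp at hx; omega
      constructor
      · exact le_trans (ih l y hl h).1 (runsCount_le_cons b l)
      · intro a z hy hhd
        have hab : b ≠ a := by simpa using hhd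
        subst hy
        cases l with
        | nil => exact absurd (List.sublist_nil.mp h) (by simp)
        | cons c l' =>
          by_cases hca : c = a
          · subst hca
            have h1 : runsCount (c :: z) ≤ runsCount (c :: l') := (ih _ _ hl h).1
            have h2 : runsCount (b :: c :: l') = runsCount (c :: l') + 1 := by
              rw [runsCount_cons_cons]
              simp [show ¬ (b = c) from fun hbc => hab (by rw [hbc])]
            omega
          · have h1 : runsCount (a :: z) < runsCount (c :: l') :=
              (ih _ _ hl h).2 a z rfl (by simp; exact fun hc => hca hc)
            exact lt_of_lt_of_le h1 (runsCount_le_cons b _)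
    | @cons_cons y' l b h =>
      have hl : l.length ≤ k := by simp at hx; omega
      constructor
      · cases y' with
        | nil =>
          have h1 := runsCount_pos b l
          have h2 : runsCount [b] = 1 := rfl
          omega
        | cons c z' =>
          by_cases hcb : c = b
          · subst hcb
            have e : runsCount (c :: c :: z') = runsCount (c :: z') := by
              rw [runsCount_cons_cons]; simp
            rw [e]
            exact le_trans (ih l _ hl h).1 (runsCount_le_cons c l)
          · have e1 : runsCount (b :: c :: z') = runsCount (c :: z') + 1 := by
              rw [runsCount_cons_cons]
              simp [show ¬ (b = c) from fun hbc => hcb hbc.symm]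
            cases l with
            | nil => exact absurd (List.sublist_nil.mp h) (by simp)
            | cons d l' =>
              by_cases hdc : d = c
              · subst hdc
                have h1 : runsCount (d :: z') ≤ runsCount (d :: l') := (ih _ _ hl h).1
                have e2 : runsCount (b :: d :: l') = runsCount (d :: l') + 1 := by
                  rw [runsCount_cons_cons]
                  simp [show ¬ (b = d) from fun hbc => hcb hbc.symm]
                omega
              · have h1 : runsCount (c :: z') < runsCount (d :: l') :=
                  (ih _ _ hl h).2 c z' rfl (by simp; exact fun hc => hdc hc)
                have h2 := runsCount_le_cons b (d :: l')
                omega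
      · intro a z hy hhd
        cases hy
        simp at hhd

lemma runsCount_le_of_sublist {y x : List Bool} (h : y.Sublist x) :
    runsCount y ≤ runsCount x :=
  (runsCount_mono_aux x.length x y le_rfl h).1

lemma runsCount_upper_aux : ∀ (k : ℕ) (x y : List Bool), x.length ≤ k → y.Sublist x →
    runsCount x + 2 * y.length ≤ runsCount y + 2 * x.length := by
  intro k
  induction k with
  | zero =>
    intro x y hx hs
    have hx0 : x = [] := List.length_eq_zero_iff.mp (Nat.le_zero.mp hx)
    subst hx0
    have hy0 : y = [] := List.sublist_nil.mp hs
    subst hy0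
    simp
  | succ k ih =>
    intro x y hx hs
    cases hs with
    | slnil => simp
    | @cons _ l b h =>
      have hl : l.length ≤ k := by simp at hx; omega
      have h1 := ih l y hl h
      have h2 := runsCount_cons_le b l
      have h3 := h.length_le
      simp only [List.length_cons]
      omega
    | @cons_cons z l b h =>
      have hl : l.length ≤ k := by simp at hx; omega
      cases l with
      | nil =>
        have hz : z = [] := List.sublist_nil.mp h
        subst hz; simp
      | cons c l' =>
        by_cases hcb : c = b
        · subst hcb
          have e : runsCount (c :: c :: l') = runsCount (c :: l') := by
            rw [runsCount_cons_cons]; simp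
          have h1 := ih _ z hl h
          have h2 := runsCount_le_cons c z
          have h3 := h.length_le
          simp only [List.length_cons, e] at h1 ⊢
          omega
        · have e : runsCount (b :: c :: l') = runsCount (c :: l') + 1 := by
            rw [runsCount_cons_cons]
            simp [show ¬ (b = c) from fun hbc => hcb hbc.symm]
          cases z with
          | nil =>
            have h4 := runsCount_le_length (c :: l')
            have h5 : runsCount [b] = 1 := rfl
            simp only [List.length_cons, e, List.length_nil] at *
            omega
          | cons d z' =>
            by_cases hdb : d = b
            · subst hdb
              have e2 : runsCount (d :: d :: z') = runsCount (d :: z') := by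
                rw [runsCount_cons_cons]; simp
              have h6 : (d :: z').Sublist l' := by
                cases h with
                | cons _ h' => exact h'
                | cons_cons => exact absurd rfl hcb
              have h1 := ih l' (d :: z') (by simp at hl ⊢; omega) h6
              have h7 := runsCount_cons_le c l'
              have h8 := h6.length_le
              simp only [List.length_cons, e, e2] at *
              omega
            · have e2 : runsCount (b :: d :: z') = runsCount (d :: z') + 1 := by
                rw [runsCount_cons_cons]
                simp [show ¬ (b = d) from fun hbc => hdb hbc.symm]
              have h1 := ih _ _ hl h
              have h3 := h.length_le
              simp only [List.length_cons, e, e2] at *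
              omega

lemma runsCount_sublist_upper {y x : List Bool} (h : y.Sublist x) :
    runsCount x ≤ runsCount y + 2 * (x.length - y.length) := by
  have h1 := runsCount_upper_aux x.length x y le_rfl h
  have h2 := h.length_le
  omega

def binLists : ℕ → Finset (List Bool)
  | 0 => {[]}
  | m+1 => (binLists m).biUnion fun l => {true :: l, false :: l}

lemma mem_binLists (m : ℕ) : ∀ x : List Bool, x ∈ binLists m ↔ x.length = m := by
  induction m with
  | zero => intro x; simp [binLists, List.length_eq_zero_iff]
  | succ m ih =>
    intro x
    simp only [binLists, Finset.mem_biUnion, Finset.mem_insert, Finset.mem_singleton]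
    constructor
    · rintro ⟨l, hl, (rfl|rfl)⟩ <;> simp [(ih l).mp hl]
    · intro hx
      cases x with
      | nil => simp at hx
      | cons a l =>
        refine ⟨l, (ih l).mpr (by simpa using hx), ?_⟩
        cases a
        · right; rfl
        · left; rfl

lemma runsCount_cons_headI (a : Bool) (l : List Bool) (hl : l ≠ []) :
    runsCount (a :: l) = runsCount l + (if l.headI = a then 0 else 1) := by
  cases l with
  | nil => exact absurd rfl hl
  | cons b l' =>
    rw [runsCount_cons_cons]
    simp only [List.headI]
    by_cases h : b = a
    · simp [h]
    · simp [h, Ne.symm h]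

noncomputable def runCard (m p : ℕ) (a : Bool) : ℕ :=
  ((binLists m).filter fun l => runsCount l = p ∧ l.headI = a).card

lemma runCard_zero (m : ℕ) (hm : 1 ≤ m) (a : Bool) : runCard m 0 a = 0 := by
  rw [runCard, Finset.card_eq_zero, Finset.filter_eq_empty_iff]
  intro l hl
  have hlen := (mem_binLists m l).mp hl
  cases l with
  | nil => simp at hlen; omega
  | cons b l' =>
    have := runsCount_pos b l'
    intro h
    omega

lemma runCard_succ (m p : ℕ) (hm : 1 ≤ m) (hp : 1 ≤ p) (a : Bool) :
    runCard (m+1) p a = runCard m p a + runCard m (p-1) (!a) := by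
  have key : runCard (m+1) p a
      = ((binLists m).filter fun l => runsCount (a :: l) = p).card := by
    rw [runCard]
    apply Finset.card_bij' (fun l _ => l.tail) (fun l _ => a :: l)
    · intro l hl
      simp only [Finset.mem_filter] at hl ⊢
      obtain ⟨hmem, hrc, hhd⟩ := hl
      have hlen := (mem_binLists _ l).mp hmem
      cases l with
      | nil => simp at hlen
      | cons b l' =>
        simp only [List.headI] at hhd
        subst hhd
        refine ⟨(mem_binLists m l').mpr (by simpa using hlen), ?_⟩
        simpa using hrc
    · intro l hl
      simp only [Finset.mem_filter] at hl ⊢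
      obtain ⟨hmem, hrc⟩ := hl
      have hlen := (mem_binLists _ l).mp hmem
      exact ⟨(mem_binLists _ _).mpr (by simp [hlen]), hrc, rfl⟩
    · intro l hl
      simp only [Finset.mem_filter] at hl
      obtain ⟨hmem, hrc, hhd⟩ := hl
      have hlen := (mem_binLists _ l).mp hmem
      cases l with
      | nil => simp at hlen
      | cons b l' =>
        simp only [List.headI] at hhd
        subst hhd
        rfl
    · intro l hl
      rfl
  rw [key]
  have split := Finset.card_filter_add_card_filter_not
    (s := (binLists m).filter fun l => runsCount (a :: l) = p)
    (p := fun l => l.headI = a)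
  rw [Finset.filter_filter, Finset.filter_filter] at split
  have e1 : ((binLists m).filter fun l => runsCount (a :: l) = p ∧ l.headI = a)
      = (binLists m).filter fun l => runsCount l = p ∧ l.headI = a := by
    apply Finset.filter_congr
    intro l hl
    have hlen := (mem_binLists _ l).mp hl
    have hne : l ≠ [] := by intro h; subst h; simp at hlen; omega
    rw [runsCount_cons_headI a l hne]
    constructor
    · rintro ⟨h1, h2⟩; simp [h2] at h1; exact ⟨h1, h2⟩
    · rintro ⟨h1, h2⟩; simp [h2, h1]
  have e2 : ((binLists m).filter fun l => runsCount (a :: l) = p ∧ ¬ l.headI = a)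
      = (binLists m).filter fun l => runsCount l = p - 1 ∧ l.headI = !a := by
    apply Finset.filter_congr
    intro l hl
    have hlen := (mem_binLists _ l).mp hl
    have hne : l ≠ [] := by intro h; subst h; simp at hlen; omega
    have hpos : 0 < runsCount l := by
      cases l with
      | nil => exact absurd rfl hne
      | cons b l' => exact runsCount_pos b l'
    rw [runsCount_cons_headI a l hne]
    constructor
    · rintro ⟨h1, h2⟩
      simp [h2] at h1
      constructor
      · omega
      · cases hx : l.headI <;> cases a <;> simp_all
    · rintro ⟨h1, h2⟩
      have hha : ¬ l.headI = a := by cases a <;> simp_all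
      refine ⟨?_, hha⟩
      rw [if_neg hha]
      omega
  rw [e1, e2] at split
  rw [← split]
  rfl

lemma runCard_eq (m : ℕ) : ∀ p, 1 ≤ m → 1 ≤ p → ∀ a,
    runCard m p a = Nat.choose (m-1) (p-1) := by
  induction m with
  | zero => intro p h; omega
  | succ m ih =>
    intro p _ hp a
    rcases Nat.eq_zero_or_pos m with hm | hm
    · subst hm
      -- m = 1 case : binLists 1 = {[true],[false]}
      have hb : binLists 1 = {[true], [false]} := rfl
      rw [runCard, hb]
      rcases Nat.lt_or_ge p 2 with hp2 | hp2
      · have hp1 : p = 1 := by omega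
        subst hp1
        cases a <;> decide
      · have : ((({[true], [false]} : Finset (List Bool))).filter
            fun l => runsCount l = p ∧ l.headI = a) = ∅ := by
          rw [Finset.filter_eq_empty_iff]
          intro l hl
          simp only [Finset.mem_insert, Finset.mem_singleton] at hl
          rcases hl with rfl | rfl
          · rintro ⟨h1, -⟩
            have : runsCount [true] = 1 := rfl
            omega
          · rintro ⟨h1, -⟩
            have : runsCount [false] = 1 := rfl
            omega
        rw [this]
        simp [Nat.choose_eq_zero_of_lt (by simp; omega : (0:ℕ) < p - 1)]
    · rw [runCard_succ m p hm hp a]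
      rcases Nat.lt_or_ge p 2 with hp2 | hp2
      · have hp1 : p = 1 := by omega
        subst hp1
        rw [ih 1 hm le_rfl a]
        simp [runCard_zero m hm]
      · rw [ih p hm (by omega) a, ih (p-1) hm (by omega) (!a)]
        obtain ⟨m', rfl⟩ : ∃ m', m = m' + 1 := ⟨m - 1, by omega⟩
        obtain ⟨q, rfl⟩ : ∃ q, p = q + 2 := ⟨p - 2, by omega⟩
        have hpa : (m' + 1).choose (q + 1) = m'.choose q + m'.choose (q + 1) :=
          Nat.choose_succ_succ _ _
        simp only [show q + 2 - 1 = q + 1 from rfl, show q + 2 - 1 - 1 = q from rfl,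
          Nat.add_sub_cancel]
        omega

lemma card_runs (m p : ℕ) (hm : 1 ≤ m) (hp : 1 ≤ p) :
    ((binLists m).filter fun l => runsCount l = p).card = 2 * Nat.choose (m-1) (p-1) := by
  have split := Finset.card_filter_add_card_filter_not
    (s := (binLists m).filter fun l => runsCount l = p)
    (p := fun l => l.headI = true)
  rw [Finset.filter_filter, Finset.filter_filter] at split
  have e2 : ((binLists m).filter fun l => runsCount l = p ∧ ¬ l.headI = true)
      = (binLists m).filter fun l => runsCount l = p ∧ l.headI = false := by
    apply Finset.filter_congr; intro l _; simp
  rw [e2] at split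
  have r1 : ((binLists m).filter fun l => runsCount l = p ∧ l.headI = true).card
      = Nat.choose (m-1) (p-1) := runCard_eq m p hm hp true
  have r2 : ((binLists m).filter fun l => runsCount l = p ∧ l.headI = false).card
      = Nat.choose (m-1) (p-1) := runCard_eq m p hm hp false
  omega

lemma ncard_biUnion_le {ι α : Type*} (s : Finset ι) (f : ι → Set α) :
    (⋃ i ∈ s, f i).ncard ≤ ∑ i ∈ s, (f i).ncard := by
  classical
  induction s using Finset.induction_on with
  | empty => simp
  | @insert j s' hns ih =>
    rw [Finset.sum_insert hns, Finset.set_biUnion_insert]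
    exact le_trans (Set.ncard_union_le _ _) (Nat.add_le_add_left ih _)


/-- Covering property of a perfect `t`-deletion code restricted to runs in `[a, b+2t]`,
and the resulting lower bound on the sum of sphere sizes. -/
theorem perfect_code_runs_cover (t n : ℕ) (ht : 0 < t) (htn : t < n)
    (C : Set (List Bool)) (hC : IsPerfectDeletionCode t n C)
    (a b : ℕ) (ha : 0 < a) (hab : a ≤ b) (hb : b ≤ n - t) :
    ((⋃ r ∈ Finset.Icc a b, {y : List Bool | y.length = n - t ∧ runsCount y = r}) ⊆
      delSphereSet t (⋃ r ∈ Finset.Icc a (b + 2 * t), {x ∈ C | runsCount x = r})) ∧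
    2 * ∑ p ∈ Finset.Icc a b, (n - t - 1).choose (p - 1) ≤
      ∑ r ∈ Finset.Icc a (b + 2 * t), (delSphereSet t {x ∈ C | runsCount x = r}).ncard := by
  classical
  obtain ⟨⟨hlen, hdisj⟩, hcover⟩ := hC
  have htle : t ≤ n := le_of_lt htn
  have hm1 : 1 ≤ n - t := by omega
  have cov : (⋃ r ∈ Finset.Icc a b, {y : List Bool | y.length = n - t ∧ runsCount y = r}) ⊆
      delSphereSet t (⋃ r ∈ Finset.Icc a (b + 2 * t), {x ∈ C | runsCount x = r}) := by
    intro y hy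
    simp only [Set.mem_iUnion, Set.mem_setOf_eq] at hy
    obtain ⟨r, hr, hylen, hyr⟩ := hy
    have hyC : y ∈ delSphereSet t C := by rw [hcover]; exact hylen
    simp only [delSphereSet, Set.mem_iUnion] at hyC
    obtain ⟨c, hcC, hsub, hlen'⟩ := hyC
    have hclen : c.length = n := hlen c hcC
    simp only [Finset.mem_Icc] at hr
    have h1 : runsCount y ≤ runsCount c := runsCount_le_of_sublist hsub
    have h2 : runsCount c ≤ runsCount y + 2 * (c.length - y.length) :=
      runsCount_sublist_upper hsub
    have h3 : c.length - y.length = t := by omega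
    simp only [delSphereSet, Set.mem_iUnion]
    refine ⟨c, ?_, hsub, hlen'⟩
    simp only [Set.mem_iUnion, Set.mem_setOf_eq, Finset.mem_Icc]
    exact ⟨runsCount c, ⟨by omega, by omega⟩, hcC, rfl⟩
  refine ⟨cov, ?_⟩
  set U : Finset (List Bool) := (Finset.Icc a b).biUnion
      (fun p => (binLists (n - t)).filter fun l => runsCount l = p) with hU
  have hUcard : U.card = ∑ p ∈ Finset.Icc a b, 2 * Nat.choose (n - t - 1) (p - 1) := by
    rw [hU, Finset.card_biUnion]
    · apply Finset.sum_congr rfl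
      intro p hp
      simp only [Finset.mem_Icc] at hp
      exact card_runs (n - t) p hm1 (by omega)
    · intro p _ q _ hpq
      rw [Function.onFun, Finset.disjoint_left]
      intro l hl hl'
      simp only [Finset.mem_filter] at hl hl'
      exact hpq (hl.2.symm.trans hl'.2)
  have hUset : (↑U : Set (List Bool)) =
      ⋃ r ∈ Finset.Icc a b, {y : List Bool | y.length = n - t ∧ runsCount y = r} := by
    ext y
    simp only [hU, Finset.coe_biUnion, Finset.coe_filter, Set.mem_iUnion, Set.mem_setOf_eq,
      mem_binLists, Finset.mem_coe]
  have hswap : delSphereSet t (⋃ r ∈ Finset.Icc a (b + 2 * t), {x ∈ C | runsCount x = r}) =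
      ⋃ r ∈ Finset.Icc a (b + 2 * t), delSphereSet t {x ∈ C | runsCount x = r} := by
    simp only [delSphereSet]
    ext y
    simp only [Set.mem_iUnion, Set.mem_setOf_eq]
    tauto
  have hfin : (⋃ r ∈ Finset.Icc a (b + 2 * t),
      delSphereSet t {x ∈ C | runsCount x = r}).Finite := by
    apply Set.Finite.subset (binLists (n - t)).finite_toSet
    intro y hy
    simp only [Set.mem_iUnion, delSphereSet, Set.mem_setOf_eq] at hy
    obtain ⟨r, hr, x, hx, hsub, hlen'⟩ := hy
    have hxl := hlen x hx.1
    simp only [Finset.mem_coe, mem_binLists]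
    omega
  calc 2 * ∑ p ∈ Finset.Icc a b, (n - t - 1).choose (p - 1)
      = ∑ p ∈ Finset.Icc a b, 2 * (n - t - 1).choose (p - 1) := Finset.mul_sum _ _ _
    _ = U.card := hUcard.symm
    _ = (↑U : Set (List Bool)).ncard := (Set.ncard_coe_finset U).symm
    _ ≤ (⋃ r ∈ Finset.Icc a (b + 2 * t),
          delSphereSet t {x ∈ C | runsCount x = r}).ncard := by
        apply Set.ncard_le_ncard _ hfin
        rw [hUset, ← hswap]
        exact cov
    _ ≤ ∑ r ∈ Finset.Icc a (b + 2 * t),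
          (delSphereSet t {x ∈ C | runsCount x = r}).ncard := ncard_biUnion_le _ _
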